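/- arXiv:1204.2517 — 5 statements merged into one kernel-verified Lean document; each statement's English description precedes it below -/
import Mathlib

section
/- Let α ∈ (0,1) and κ_α = (1-α) α^{α/(1-α)} / 4^{1/(1-α)}. Define L(a,b) = κ_α (|b|^{2/α}/(-a))^{α/(1-α)} for a < 0, L(0,0) = 0, L = +∞ otherwise, and H(ρ,w) = |w|²/ρ^α for ρ > 0, H(0,0) = 0, H = +∞ otherwise. Then L is the convex (Legendre–Fenchel) conjugate of H, i.e. L(a,b) = sup over (ρ,w) ∈ ℝ × ℝ^d of (a·ρ + ⟨b,w⟩ − H(ρ,w)). -/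
open scoped RealInnerProductSpace
open Classical

/-- `H(ρ,w) = |w|²/ρ^α` if `ρ > 0`, `H(0,0) = 0`, `+∞` otherwise. -/
noncomputable def Hfun (d : ℕ) (α : ℝ) (p : ℝ × EuclideanSpace ℝ (Fin d)) : EReal :=
  if 0 < p.1 then ((‖p.2‖ ^ 2 / p.1 ^ α : ℝ) : EReal)
  else if p.1 = 0 ∧ p.2 = 0 then 0 else ⊤

/-- `L(a,b) = κ_α (|b|^{2/α}/(-a))^{α/(1-α)}` if `a < 0`, `L(0,0) = 0`, `+∞` otherwise. -/
noncomputable def Lfun (d : ℕ) (α : ℝ) (q : ℝ × EuclideanSpace ℝ (Fin d)) : EReal :=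
  if q.1 < 0 then
    ((((1 - α) * α ^ (α / (1 - α)) / 4 ^ ((1 : ℝ) / (1 - α))) *
      (‖q.2‖ ^ ((2 : ℝ) / α) / (-q.1)) ^ (α / (1 - α)) : ℝ) : EReal)
  else if q.1 = 0 ∧ q.2 = 0 then 0 else ⊤

lemma young_aux {α A c ρ : ℝ} (hα0 : 0 < α) (hα1 : α < 1) (hA : 0 < A) (hc : 0 ≤ c)
    (hρ : 0 ≤ ρ) :
    c * ρ ^ α - A * ρ ≤
      (1 - α) * α ^ (α / (1 - α)) * c ^ ((1:ℝ) / (1 - α)) * A ^ (-(α / (1 - α))) := by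
  have h1α : (0:ℝ) < 1 - α := by linarith
  set β := α / (1 - α) with hβ
  set M : ℝ := (1 - α) * α ^ β * c ^ ((1:ℝ) / (1 - α)) * A ^ (-β) with hM
  have hMnn : 0 ≤ M := by positivity
  have hp1 : (0:ℝ) ≤ A * ρ / α := by positivity
  have hp2 : (0:ℝ) ≤ M / (1 - α) := by positivity
  have key := Real.geom_mean_le_arith_mean2_weighted hα0.le h1α.le hp1 hp2 (by ring)
  have e2 : (M / (1 - α)) ^ (1 - α) = α ^ α * c * A ^ (-α) := by
    have hMdiv : M / (1 - α) = α ^ β * c ^ ((1:ℝ) / (1 - α)) * A ^ (-β) := by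
      field_simp [hM]; ring
    rw [hMdiv, Real.mul_rpow (by positivity) (by positivity),
      Real.mul_rpow (by positivity) (by positivity),
      ← Real.rpow_mul hα0.le, ← Real.rpow_mul hc, ← Real.rpow_mul hA.le,
      show β * (1 - α) = α from by rw [hβ]; field_simp,
      show (1:ℝ) / (1 - α) * (1 - α) = 1 from by field_simp,
      show (-β) * (1 - α) = -α from by rw [hβ]; field_simp,
      Real.rpow_one]
  have e1 : (A * ρ / α) ^ α = A ^ α * ρ ^ α / α ^ α := by
    rw [Real.div_rpow (by positivity) hα0.le, Real.mul_rpow hA.le hρ]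
  have e3 : (A * ρ / α) ^ α * (M / (1 - α)) ^ (1 - α) = c * ρ ^ α := by
    rw [e1, e2]
    have hAa : A ^ α * A ^ (-α) = 1 := by
      rw [← Real.rpow_add hA]; simp
    have hαa : (0:ℝ) < α ^ α := Real.rpow_pos_of_pos hα0 α
    field_simp
    linear_combination (ρ ^ α * c) * hAa
  have e4 : α * (A * ρ / α) + (1 - α) * (M / (1 - α)) = A * ρ + M := by
    field_simp
  rw [e3, e4] at key
  linarith

lemma attain_aux {α A c : ℝ} (hα0 : 0 < α) (hα1 : α < 1) (hA : 0 < A) (hc : 0 < c) :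
    c * ((α * c / A) ^ ((1:ℝ) / (1 - α))) ^ α - A * (α * c / A) ^ ((1:ℝ) / (1 - α)) =
      (1 - α) * α ^ (α / (1 - α)) * c ^ ((1:ℝ) / (1 - α)) * A ^ (-(α / (1 - α))) := by
  have h1α : (0:ℝ) < 1 - α := by linarith
  set β := α / (1 - α) with hβ
  have hx : (0:ℝ) < α * c / A := by positivity
  have hρα : ((α * c / A) ^ ((1:ℝ) / (1 - α))) ^ α = (α * c / A) ^ β := by
    rw [← Real.rpow_mul hx.le, show (1:ℝ) / (1 - α) * α = β from by rw [hβ]; field_simp]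
  have hρ : (α * c / A) ^ ((1:ℝ) / (1 - α)) = (α * c / A) ^ β * (α * c / A) := by
    rw [← Real.rpow_add_one hx.ne', show β + 1 = (1:ℝ) / (1 - α) from by rw [hβ]; field_simp; ring]
  have hxβ : (α * c / A) ^ β = α ^ β * c ^ β * A ^ (-β) := by
    rw [Real.div_rpow (by positivity) hA.le, Real.mul_rpow hα0.le hc.le, Real.rpow_neg hA.le,
      div_eq_mul_inv]
  have hcc : c ^ β * c = c ^ ((1:ℝ) / (1 - α)) := by
    rw [← Real.rpow_add_one hc.ne', show β + 1 = (1:ℝ) / (1 - α) from by rw [hβ]; field_simp; ring]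
  rw [hρα, hρ]
  have : c * (α * c / A) ^ β - A * ((α * c / A) ^ β * (α * c / A)) =
      (α * c / A) ^ β * c * (1 - α) := by
    field_simp
  rw [this, hxβ]
  linear_combination (1 - α) * α ^ β * A ^ (-β) * hcc

lemma Mval_aux {α A B : ℝ} (hα0 : 0 < α) (hα1 : α < 1) (hA : 0 < A) (hB : 0 ≤ B) :
    (1 - α) * α ^ (α / (1 - α)) / 4 ^ ((1:ℝ) / (1 - α)) * (B ^ ((2:ℝ) / α) / A) ^ (α / (1 - α))
      = (1 - α) * α ^ (α / (1 - α)) * (B ^ 2 / 4) ^ ((1:ℝ) / (1 - α)) *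
        A ^ (-(α / (1 - α))) := by
  have h1α : (0:ℝ) < 1 - α := by linarith
  set β := α / (1 - α) with hβ
  have h1 : (B ^ ((2:ℝ) / α) / A) ^ β = B ^ ((2:ℝ) / (1 - α)) * A ^ (-β) := by
    rw [Real.div_rpow (by positivity) hA.le, Real.rpow_neg hA.le, ← Real.rpow_mul hB,
      show (2:ℝ) / α * β = 2 / (1 - α) from by rw [hβ]; field_simp, div_eq_mul_inv]
  have h2 : (B ^ 2 / 4) ^ ((1:ℝ) / (1 - α)) = B ^ ((2:ℝ) / (1 - α)) / 4 ^ ((1:ℝ) / (1 - α)) := by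
    rw [Real.div_rpow (by positivity) (by norm_num), ← Real.rpow_natCast B 2,
      ← Real.rpow_mul hB, show (2:ℕ) * ((1:ℝ)/(1-α)) = (2:ℝ)/(1-α) from by push_cast; rw [mul_one_div]]
  rw [h1, h2]; ring

lemma quad_aux {t B s : ℝ} (hs : 0 < s) : t * B - t ^ 2 / s ≤ B ^ 2 / 4 * s := by
  have h2 : (t * B - t ^ 2 / s) * s = t * B * s - t ^ 2 := by field_simp
  rw [← mul_le_mul_iff_of_pos_right hs, h2]
  nlinarith [sq_nonneg (2 * t - B * s)]

lemma term_aux {d : ℕ} (b : EuclideanSpace ℝ (Fin d)) {s α : ℝ} (hs : 0 < s) :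
    ⟪b, (s ^ α / 2) • b⟫ - ‖(s ^ α / 2) • b‖ ^ 2 / s ^ α = s ^ α * ‖b‖ ^ 2 / 4 := by
  have hsα : (0:ℝ) < s ^ α := Real.rpow_pos_of_pos hs α
  rw [real_inner_smul_right, real_inner_self_eq_norm_sq, norm_smul, mul_pow,
    Real.norm_eq_abs, abs_of_nonneg (by positivity : (0:ℝ) ≤ s ^ α / 2)]
  field_simp
  ring

/-- `L` is the Legendre–Fenchel conjugate of `H`:
`L(a,b) = sup_{(ρ,w)} (aρ + ⟨b,w⟩ − H(ρ,w))`. -/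
theorem Lfun_eq_conjugate_Hfun (d : ℕ) (hd : 1 ≤ d) (α : ℝ) (hα0 : 0 < α) (hα1 : α < 1)
    (q : ℝ × EuclideanSpace ℝ (Fin d)) :
    Lfun d α q =
      ⨆ p : ℝ × EuclideanSpace ℝ (Fin d),
        (((q.1 * p.1 + ⟪q.2, p.2⟫ : ℝ) : EReal) - Hfun d α p) := by
  obtain ⟨a, b⟩ := q
  simp only
  have h1α : (0:ℝ) < 1 - α := by linarith
  by_cases ha : a < 0
  · -- case a < 0
    have hA : (0:ℝ) < -a := by linarith
    have hL : Lfun d α (a, b) =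
        (((1 - α) * α ^ (α / (1 - α)) * (‖b‖ ^ 2 / 4) ^ ((1:ℝ) / (1 - α)) *
          (-a) ^ (-(α / (1 - α))) : ℝ) : EReal) := by
      simp only [Lfun, if_pos ha]
      exact_mod_cast congrArg (fun x : ℝ => (x : EReal))
        (Mval_aux hα0 hα1 hA (norm_nonneg b))
    rw [hL]
    apply le_antisymm
    · by_cases hb : b = 0
      · have hM0 : (1 - α) * α ^ (α / (1 - α)) * (‖b‖ ^ 2 / 4) ^ ((1:ℝ) / (1 - α)) *
            (-a) ^ (-(α / (1 - α))) = 0 := by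
          have h40 : ((0:ℝ) ^ 2 / 4 : ℝ) = 0 := by norm_num
          rw [hb, norm_zero, h40, Real.zero_rpow (by positivity : ((1:ℝ)/(1-α)) ≠ 0)]
          ring
        rw [hM0]
        refine le_iSup_of_le (0, 0) ?_
        simp [Hfun]
      · have hBpos : (0:ℝ) < ‖b‖ := norm_pos_iff.mpr hb
        have hc : (0:ℝ) < ‖b‖ ^ 2 / 4 := by positivity
        set ρ : ℝ := (α * (‖b‖ ^ 2 / 4) / (-a)) ^ ((1:ℝ) / (1 - α)) with hρdef
        have hρ : 0 < ρ := Real.rpow_pos_of_pos (div_pos (mul_pos hα0 hc) hA) _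
        refine le_iSup_of_le (ρ, (ρ ^ α / 2) • b) ?_
        have hH : Hfun d α (ρ, (ρ ^ α / 2) • b) =
            ((‖(ρ ^ α / 2) • b‖ ^ 2 / ρ ^ α : ℝ) : EReal) := by
          simp only [Hfun, if_pos hρ]
        rw [hH, ← EReal.coe_sub, EReal.coe_le_coe_iff]
        have ht := term_aux b hρ (α := α)
        have hat := attain_aux hα0 hα1 hA hc
        rw [← hρdef] at hat
        linarith
    · refine iSup_le fun p => ?_
      obtain ⟨ρ, w⟩ := p
      by_cases hρ : 0 < ρ
      · have hH : Hfun d α (ρ, w) = ((‖w‖ ^ 2 / ρ ^ α : ℝ) : EReal) := by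
          simp only [Hfun, if_pos hρ]
        rw [hH, ← EReal.coe_sub, EReal.coe_le_coe_iff]
        have h1 := real_inner_le_norm b w
        have h2 := quad_aux (t := ‖w‖) (B := ‖b‖) (Real.rpow_pos_of_pos hρ α)
        have h3 := young_aux hα0 hα1 hA (show (0:ℝ) ≤ ‖b‖ ^ 2 / 4 by positivity) hρ.le
        nlinarith [norm_nonneg w, Real.rpow_pos_of_pos hρ α]
      · by_cases h0 : ρ = 0 ∧ w = 0
        · obtain ⟨h01, h02⟩ := h0
          subst h01; subst h02
          have hH : Hfun d α ((0:ℝ), (0:EuclideanSpace ℝ (Fin d))) = 0 := by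
            simp [Hfun]
          rw [hH]
          simp only [mul_zero, inner_zero_right, add_zero, EReal.coe_zero, sub_zero]
          exact EReal.coe_nonneg.mpr (by positivity)
        · have hH : Hfun d α (ρ, w) = ⊤ := by
            simp only [Hfun, if_neg hρ, if_neg h0]
          rw [hH, EReal.sub_top]
          exact bot_le
  · by_cases h0 : a = 0 ∧ b = 0
    · obtain ⟨h01, h02⟩ := h0
      subst h01; subst h02
      have hL : Lfun d α ((0:ℝ), (0:EuclideanSpace ℝ (Fin d))) = 0 := by simp [Lfun]
      rw [hL]
      apply le_antisymm
      · refine le_iSup_of_le (0, 0) ?_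
        simp [Hfun]
      · refine iSup_le fun p => ?_
        obtain ⟨ρ, w⟩ := p
        by_cases hρ : 0 < ρ
        · have hH : Hfun d α (ρ, w) = ((‖w‖ ^ 2 / ρ ^ α : ℝ) : EReal) := by
            simp only [Hfun, if_pos hρ]
          rw [hH, ← EReal.coe_sub, ← EReal.coe_zero, EReal.coe_le_coe_iff]
          simp only [zero_mul, inner_zero_left, add_zero, zero_add, zero_sub]
          have : (0:ℝ) ≤ ‖w‖ ^ 2 / ρ ^ α := by positivity
          linarith
        · by_cases hw : ρ = 0 ∧ w = 0
          · obtain ⟨h01, h02⟩ := hw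
            subst h01; subst h02
            simp [Hfun]
          · have hH : Hfun d α (ρ, w) = ⊤ := by
              simp only [Hfun, if_neg hρ, if_neg hw]
            rw [hH, EReal.sub_top]
            exact bot_le
    · have hL : Lfun d α (a, b) = ⊤ := by
        simp only [Lfun, if_neg ha, if_neg h0]
      rw [hL]
      refine ((EReal.eq_top_iff_forall_lt _).mpr fun y => ?_).symm
      have ha' : 0 ≤ a := not_lt.mp ha
      rcases ha'.lt_or_eq with hpos | hzero
      · set ρ : ℝ := (|y| + 1) / a with hρdef
        have hρ : 0 < ρ := by positivity
        refine lt_of_lt_of_le ?_ (le_iSup _ (ρ, (0:EuclideanSpace ℝ (Fin d))))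
        have hH : Hfun d α (ρ, (0:EuclideanSpace ℝ (Fin d))) = 0 := by
          simp [Hfun, hρ]
        rw [hH, sub_zero]
        simp only [inner_zero_right, add_zero]
        rw [EReal.coe_lt_coe_iff, hρdef]
        rw [mul_div_cancel₀ _ hpos.ne']
        exact lt_of_le_of_lt (le_abs_self y) (lt_add_one _)
      · have hb : b ≠ 0 := fun h => h0 ⟨hzero.symm, h⟩
        have hB : (0:ℝ) < ‖b‖ := norm_pos_iff.mpr hb
        set s : ℝ := ((|y| + 1) * 4 / ‖b‖ ^ 2) ^ ((1:ℝ) / α) with hsdef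
        have hs : 0 < s := Real.rpow_pos_of_pos (by positivity) _
        have hsα : s ^ α = (|y| + 1) * 4 / ‖b‖ ^ 2 := by
          rw [hsdef, ← Real.rpow_mul (by positivity), one_div,
            inv_mul_cancel₀ hα0.ne', Real.rpow_one]
        refine lt_of_lt_of_le ?_ (le_iSup _ (s, (s ^ α / 2) • b))
        have hH : Hfun d α (s, (s ^ α / 2) • b) =
            ((‖(s ^ α / 2) • b‖ ^ 2 / s ^ α : ℝ) : EReal) := by
          simp only [Hfun, if_pos hs]
        rw [hH, ← EReal.coe_sub, EReal.coe_lt_coe_iff]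
        have ht := term_aux b hs (α := α)
        have hval : s ^ α * ‖b‖ ^ 2 / 4 = |y| + 1 := by
          rw [hsα]; field_simp
        have hy : y < |y| + 1 := lt_of_le_of_lt (le_abs_self y) (lt_add_one _)
        rw [← hzero]
        linarith
end

section
/- Let α ∈ (0,1), κ_α = (1-α)α^{α/(1-α)}/4^{1/(1-α)}, d_α = (2-α)α^{α/(2-α)}/2^{2/(2-α)}. For all A ≥ 0 and σ ≥ 0: κ_α A^{α/(1-α)} − d_α A^{α/(2-α)} σ ≥ − σ^{2-α}. -/
/-- with `κ_α = (1-α)α^{α/(1-α)}/4^{1/(1-α)}` and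
`d_α = (2-α)α^{α/(2-α)}/2^{2/(2-α)}`, for all `A ≥ 0` and `σ ≥ 0`:
`κ_α A^{α/(1-α)} − d_α A^{α/(2-α)} σ ≥ − σ^{2-α}`. -/
theorem young_type_inequality (α : ℝ) (hα0 : 0 < α) (hα1 : α < 1)
    (A σ : ℝ) (hA : 0 ≤ A) (hσ : 0 ≤ σ) :
    ((1 - α) * α ^ (α / (1 - α)) / 4 ^ ((1 : ℝ) / (1 - α))) * A ^ (α / (1 - α)) -
      ((2 - α) * α ^ (α / (2 - α)) / 2 ^ ((2 : ℝ) / (2 - α))) * A ^ (α / (2 - α)) * σ ≥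
      -σ ^ (2 - α) := by
  have hβ0 : (0:ℝ) < 1 - α := by linarith
  have hγ0 : (0:ℝ) < 2 - α := by linarith
  set β := 1 - α with hβ
  set γ := 2 - α with hγ
  set κ := β * α ^ (α / β) / 4 ^ ((1:ℝ) / β) with hκ
  set d := γ * α ^ (α / γ) / 2 ^ ((2:ℝ) / γ) with hd
  have h2γ : (0:ℝ) < (2:ℝ) ^ ((2:ℝ)/γ) := Real.rpow_pos_of_pos (by norm_num) _
  have hαγ : (0:ℝ) < α ^ (α/γ) := Real.rpow_pos_of_pos hα0 _
  have hd0 : 0 < d := by rw [hd]; positivity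
  -- e := d / γ = α^{α/γ} / 2^{2/γ}
  set e := α ^ (α / γ) / 2 ^ ((2:ℝ) / γ) with he
  have he0 : 0 < e := by rw [he]; positivity
  have hde : d = γ * e := by rw [hd, he]; ring
  set l := e ^ ((1:ℝ)/γ) with hl
  have hl0 : 0 < l := Real.rpow_pos_of_pos he0 _
  -- conjugate exponents p = γ/β, q = γ
  have hpq : (γ/β).HolderConjugate γ := by
    rw [Real.holderConjugate_iff]; constructor
    · rw [lt_div_iff₀ hβ0]; simp only [hβ, hγ]; linarith
    · rw [inv_div]; field_simp; simp only [hβ, hγ]; ring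
  have key := Real.young_inequality_of_nonneg
    (a := l * A ^ (α/γ)) (b := σ / l)
    (by positivity) (by positivity) hpq
  have hab : (l * A ^ (α/γ)) * (σ / l) = A ^ (α/γ) * σ := by
    field_simp
  -- a ^ p
  have hap : (l * A ^ (α/γ)) ^ (γ/β) = e ^ ((1:ℝ)/β) * A ^ (α/β) := by
    rw [Real.mul_rpow hl0.le (Real.rpow_nonneg hA _), hl,
      ← Real.rpow_mul he0.le, ← Real.rpow_mul hA]
    rw [show (1:ℝ)/γ * (γ/β) = 1/β by field_simp,
      show α/γ * (γ/β) = α/β by field_simp]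
  -- b ^ q
  have hbq : (σ / l) ^ γ = σ ^ γ / e := by
    rw [Real.div_rpow hσ hl0.le, hl, ← Real.rpow_mul he0.le]
    congr 1
    rw [one_div_mul_cancel hγ0.ne', Real.rpow_one]
  rw [hab, hap, hbq] at key
  -- multiply Young's inequality by d
  have key2 : d * (A ^ (α/γ) * σ) ≤ d * (e ^ ((1:ℝ)/β) * A ^ (α/β) / (γ/β) + σ ^ γ / e / γ) :=
    mul_le_mul_of_nonneg_left key hd0.le
  -- identity: d * e^{1/β} / (γ/β) = κ
  have hid : d * (e ^ ((1:ℝ)/β)) / (γ/β) = κ := by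
    have h1 : d * (e ^ ((1:ℝ)/β)) / (γ/β) = β * (e * e ^ ((1:ℝ)/β)) := by
      rw [hde]; field_simp
    have h2 : e * e ^ ((1:ℝ)/β) = e ^ (γ/β) := by
      rw [← Real.rpow_one_add' he0.le (by positivity)]
      congr 1
      field_simp
      simp only [hβ, hγ]; ring
    have h3 : e ^ (γ/β) = α ^ (α/β) / 4 ^ ((1:ℝ)/β) := by
      rw [he, Real.div_rpow hαγ.le h2γ.le, ← Real.rpow_mul hα0.le,
        ← Real.rpow_mul (by norm_num : (0:ℝ) ≤ 2)]
      have h4 : ((4:ℝ)) ^ ((1:ℝ)/β) = (2:ℝ) ^ ((2:ℝ)/γ * (γ/β)) := by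
        rw [show (4:ℝ) = (2:ℝ) ^ (2:ℝ) by
          rw [show (2:ℝ) = ((2:ℕ):ℝ) by norm_num, Real.rpow_natCast]; norm_num,
          ← Real.rpow_mul (by norm_num : (0:ℝ) ≤ 2)]
        congr 1
        field_simp
      rw [h4]
      congr 2
      field_simp
    rw [h1, h2, h3, hκ]; ring
  -- identity: d * (σ^γ / e / γ) = σ^γ
  have hid2 : d * (σ ^ γ / e / γ) = σ ^ γ := by
    rw [hde]; field_simp
  rw [mul_add, hid2, show d * (e ^ ((1:ℝ)/β) * A ^ (α/β) / (γ/β)) =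
      (d * (e ^ ((1:ℝ)/β)) / (γ/β)) * A ^ (α/β) by ring, hid] at key2
  have : d * A ^ (α/γ) * σ ≤ κ * A ^ (α/β) + σ ^ γ := by
    calc d * A ^ (α/γ) * σ = d * (A ^ (α/γ) * σ) := by ring
    _ ≤ κ * A ^ (α/β) + σ ^ γ := key2
  linarith
end

section
/- Let α ∈ (0,1) and let φ : [0,1] × ℝ^d → ℝ be C¹ with ∂_t φ < 0 everywhere. Set A(t,x) = |∇φ(t,x)|^{2/α}/(−∂_t φ(t,x)) and d_α = (2-α)α^{α/(2-α)}/2^{2/(2-α)}. Then for every absolutely continuous curve γ : [0,1] → ℝ^d with derivative in L^{2/(2-α)}, the function t ↦ φ(t,γ(t)) − d_α ∫₀^t A(s,γ(s))^{α/(2-α)} |γ'(s)|^{2/(2-α)} ds is nonincreasing; in particular φ(1,γ(1)) ≤ φ(0,γ(0)) + d_α ∫₀¹ A(s,γ(s))^{α/(2-α)} |γ'(s)|^{2/(2-α)} ds. -/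
open MeasureTheory

lemma hj_young {α : ℝ} (hα0 : 0 < α) (hα1 : α < 1) {s : ℝ} (hs : 0 ≤ s) :
    s ≤ 1 + (2 - α) * α ^ (α / (2 - α)) / 2 ^ ((2 : ℝ) / (2 - α)) * s ^ ((2 : ℝ) / (2 - α)) := by
  have h2α : (0:ℝ) < 2 - α := by linarith
  have hαhalf : (0:ℝ) < α / 2 := by linarith
  set lam : ℝ := (α / 2) ^ (α / 2 : ℝ) with hlam_def
  have hlam : 0 < lam := Real.rpow_pos_of_pos hαhalf _
  have hpq : (2 / α : ℝ).HolderConjugate (2 / (2 - α)) := by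
    rw [Real.holderConjugate_iff]; constructor
    · rw [lt_div_iff₀ hα0]; linarith
    · rw [inv_div, inv_div]; ring
  have hy := Real.young_inequality_of_nonneg (a := lam⁻¹) (b := lam * s)
    (by positivity) (by positivity) hpq
  have hs' : lam⁻¹ * (lam * s) = s := by field_simp
  have hlam2α : lam ^ ((2:ℝ)/α) = α / 2 := by
    rw [hlam_def, ← Real.rpow_mul hαhalf.le]
    have : α / 2 * (2 / α) = 1 := by field_simp
    rw [this, Real.rpow_one]
  have e1 : (lam⁻¹) ^ ((2:ℝ)/α) / (2/α) = 1 := by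
    rw [Real.inv_rpow hlam.le, hlam2α]
    field_simp
  have hlamq : lam ^ ((2:ℝ)/(2-α)) = (α/2) ^ (α / (2 - α)) := by
    rw [hlam_def, ← Real.rpow_mul hαhalf.le]
    congr 1
    field_simp
  have e2 : (lam * s) ^ ((2:ℝ)/(2-α)) / (2/(2-α))
      = (2 - α) * α ^ (α / (2 - α)) / 2 ^ ((2 : ℝ) / (2 - α)) * s ^ ((2 : ℝ) / (2 - α)) := by
    rw [Real.mul_rpow hlam.le hs, hlamq, Real.div_rpow hα0.le (by norm_num : (0:ℝ) ≤ 2)]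
    have h2exp : (2:ℝ) ^ ((2:ℝ)/(2-α)) = 2 * 2 ^ (α / (2 - α)) := by
      have : (2:ℝ)/(2-α) = 1 + α / (2 - α) := by field_simp; ring
      rw [this, Real.rpow_add (by norm_num : (0:ℝ) < 2), Real.rpow_one]
    rw [h2exp]
    have hp2 : (0:ℝ) < 2 ^ (α / (2 - α)) := Real.rpow_pos_of_pos (by norm_num) _
    field_simp
  rw [hs'] at hy
  rw [e1, e2] at hy
  linarith

lemma hj_pointwise {α dα : ℝ} (hα0 : 0 < α) (hα1 : α < 1)
    (hdα : dα = (2 - α) * α ^ (α / (2 - α)) / 2 ^ ((2 : ℝ) / (2 - α)))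
    {m p v : ℝ} (hm : 0 < m) (hp : 0 ≤ p) (hv : 0 ≤ v) :
    p * v ≤ m + dα * ((p ^ ((2:ℝ)/α) / m) ^ (α / (2 - α)) * v ^ ((2:ℝ)/(2-α))) := by
  have h2α : (0:ℝ) < 2 - α := by linarith
  have hdα0 : 0 ≤ dα := by rw [hdα]; positivity
  have hs : 0 ≤ p * v / m := by positivity
  have hy := hj_young hα0 hα1 hs
  rw [← hdα] at hy
  have key : m * ((p * v / m) ^ ((2:ℝ)/(2-α)))
      = (p ^ ((2:ℝ)/α) / m) ^ (α / (2 - α)) * v ^ ((2:ℝ)/(2-α)) := by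
    rw [Real.div_rpow (by positivity) hm.le, Real.mul_rpow hp hv,
        Real.div_rpow (by positivity) hm.le, ← Real.rpow_mul hp]
    have hexp : (2:ℝ)/α * (α / (2 - α)) = 2/(2-α) := by field_simp
    rw [hexp]
    have hmq : m ^ ((2:ℝ)/(2-α)) = m ^ (α/(2-α)) * m := by
      have : (2:ℝ)/(2-α) = α/(2-α) + 1 := by field_simp; ring
      rw [this, Real.rpow_add hm, Real.rpow_one]
    rw [hmq]
    have h1 : (0:ℝ) < m ^ (α/(2-α)) := Real.rpow_pos_of_pos hm _
    field_simp
  have hmul := mul_le_mul_of_nonneg_left hy hm.le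
  have hms : m * (p * v / m) = p * v := by field_simp
  calc p * v = m * (p * v / m) := hms.symm
    _ ≤ m * (1 + dα * (p * v / m) ^ ((2:ℝ)/(2-α))) := hmul
    _ = m + dα * (m * ((p * v / m) ^ ((2:ℝ)/(2-α)))) := by ring
    _ = m + dα * ((p ^ ((2:ℝ)/α) / m) ^ (α / (2 - α)) * v ^ ((2:ℝ)/(2-α))) := by rw [key]

/-- if `φ` is C¹ with `∂_t φ < 0`, `A = |∇φ|^{2/α}/(−∂_t φ)` and
`d_α = (2-α)α^{α/(2-α)}/2^{2/(2-α)}`, then along any curve `γ` with derivative `γ'`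
(in `L^{2/(2-α)}`), the map
`t ↦ φ(t,γ(t)) − d_α ∫₀^t A(s,γ(s))^{α/(2-α)} |γ'(s)|^{2/(2-α)} ds`
is nonincreasing on `[0,1]`; in particular
`φ(1,γ(1)) ≤ φ(0,γ(0)) + d_α ∫₀¹ A(s,γ(s))^{α/(2-α)} |γ'(s)|^{2/(2-α)} ds`. -/
theorem hamilton_jacobi_along_curves (d : ℕ) (hd : 1 ≤ d) (α : ℝ) (hα0 : 0 < α) (hα1 : α < 1)
    (dα : ℝ) (hdα : dα = (2 - α) * α ^ (α / (2 - α)) / 2 ^ ((2 : ℝ) / (2 - α)))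
    (φ : ℝ × EuclideanSpace ℝ (Fin d) → ℝ) (hφ : ContDiff ℝ 1 φ)
    (dtφ : ℝ × EuclideanSpace ℝ (Fin d) → ℝ)
    (hdt : ∀ (t : ℝ) (x : EuclideanSpace ℝ (Fin d)),
      HasDerivAt (fun s => φ (s, x)) (dtφ (t, x)) t)
    (hneg : ∀ p, dtφ p < 0)
    (A : ℝ × EuclideanSpace ℝ (Fin d) → ℝ)
    (hA : ∀ p, A p = ‖gradient (fun y => φ (p.1, y)) p.2‖ ^ ((2 : ℝ) / α) / (-dtφ p))
    (γ γ' : ℝ → EuclideanSpace ℝ (Fin d))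
    (hγ : ∀ t ∈ Set.Icc (0 : ℝ) 1, HasDerivAt γ (γ' t) t)
    (hint : IntervalIntegrable
      (fun s => A (s, γ s) ^ (α / (2 - α)) * ‖γ' s‖ ^ ((2 : ℝ) / (2 - α))) volume 0 1) :
    AntitoneOn
      (fun t => φ (t, γ t) -
        dα * ∫ s in (0 : ℝ)..t, A (s, γ s) ^ (α / (2 - α)) * ‖γ' s‖ ^ ((2 : ℝ) / (2 - α)))
      (Set.Icc 0 1) ∧
    φ (1, γ 1) ≤ φ (0, γ 0) +
      dα * ∫ s in (0 : ℝ)..(1 : ℝ),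
        A (s, γ s) ^ (α / (2 - α)) * ‖γ' s‖ ^ ((2 : ℝ) / (2 - α)) := by
  have h2α : (0:ℝ) < 2 - α := by linarith
  have hdα0 : 0 < dα := by rw [hdα]; positivity
  set g : ℝ → ℝ := fun s => A (s, γ s) ^ (α / (2 - α)) * ‖γ' s‖ ^ ((2 : ℝ) / (2 - α)) with hg
  have hA0 : ∀ p, 0 ≤ A p := by
    intro p
    rw [hA]
    exact div_nonneg (Real.rpow_nonneg (norm_nonneg _) _) (by linarith [hneg p])
  have hg0 : ∀ t, 0 ≤ g t := by
    intro t
    exact mul_nonneg (Real.rpow_nonneg (hA0 _) _) (Real.rpow_nonneg (norm_nonneg _) _)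
  have hγc : ContinuousOn γ (Set.Icc 0 1) := fun t ht => (hγ t ht).continuousAt.continuousWithinAt
  have hDφ : ∀ p : ℝ × EuclideanSpace ℝ (Fin d), HasFDerivAt φ (fderiv ℝ φ p) p :=
    fun p => (hφ.differentiable one_ne_zero p).hasFDerivAt
  -- identify dtφ with the partial derivative
  have hdtφ_eq : ∀ p : ℝ × EuclideanSpace ℝ (Fin d), dtφ p = fderiv ℝ φ p (1, 0) := by
    rintro ⟨t, x⟩
    have h1 : HasDerivAt (fun s : ℝ => ((s : ℝ), x)) ((1 : ℝ), (0 : EuclideanSpace ℝ (Fin d))) t :=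
      (hasDerivAt_id' t).prodMk (hasDerivAt_const t x)
    have h2 : HasDerivAt (fun s => φ (s, x)) (fderiv ℝ φ (t, x) (1, 0)) t :=
      (hDφ (t, x)).comp_hasDerivAt t h1
    exact (hdt t x).unique h2
  -- continuity of t ↦ dtφ (t, γ t) on [0,1]
  have hdtγ : ContinuousOn (fun t : ℝ => dtφ (t, γ t)) (Set.Icc 0 1) := by
    have h1 : Continuous fun p : ℝ × EuclideanSpace ℝ (Fin d) => fderiv ℝ φ p (1, 0) :=
      (hφ.continuous_fderiv one_ne_zero).clm_apply continuous_const
    have h2 : ContinuousOn (fun t : ℝ => ((t : ℝ), γ t)) (Set.Icc 0 1) :=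
      (continuousOn_id).prodMk hγc
    exact (h1.comp_continuousOn h2).congr fun t ht => hdtφ_eq (t, γ t)
  -- the gradient identity
  have hgrad : ∀ (t : ℝ) (x v : EuclideanSpace ℝ (Fin d)),
      (inner ℝ (gradient (fun y => φ (t, y)) x) v : ℝ) = fderiv ℝ φ (t, x) (0, v) := by
    intro t x v
    set P : EuclideanSpace ℝ (Fin d) →L[ℝ] ℝ × EuclideanSpace ℝ (Fin d) := (0 : EuclideanSpace ℝ (Fin d) →L[ℝ] ℝ).prod (ContinuousLinearMap.id ℝ (EuclideanSpace ℝ (Fin d))) with hP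
    have h1 : HasFDerivAt (fun y : EuclideanSpace ℝ (Fin d) => ((t : ℝ), y)) P x :=
      (hasFDerivAt_const t x).prodMk (hasFDerivAt_id x)
    have h2 : HasFDerivAt (fun y => φ (t, y)) ((fderiv ℝ φ (t, x)).comp P) x :=
      (hDφ (t, x)).comp x h1
    rw [gradient, h2.fderiv, ← InnerProductSpace.toDual_apply_apply,
      LinearIsometryEquiv.apply_symm_apply]
    simp [hP]
  set Φ : ℝ → ℝ := fun t => φ (t, γ t) with hΦdef
  set Φ' : ℝ → ℝ := fun t => fderiv ℝ φ (t, γ t) (1, γ' t) with hΦ'def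
  have hΦ : ∀ t ∈ Set.Icc (0:ℝ) 1, HasDerivAt Φ (Φ' t) t := fun t ht =>
    (hDφ (t, γ t)).comp_hasDerivAt t ((hasDerivAt_id' t).prodMk (hγ t ht))
  have hΦ'_eq : ∀ t : ℝ, Φ' t =
      dtφ (t, γ t) + (inner ℝ (gradient (fun y => φ (t, y)) (γ t)) (γ' t) : ℝ) := by
    intro t
    have hsplit : ((1:ℝ), γ' t) = ((1:ℝ), (0:EuclideanSpace ℝ (Fin d))) + ((0:ℝ), γ' t) := by simp
    rw [hΦ'def]
    simp only
    rw [hsplit, map_add, hdtφ_eq (t, γ t), hgrad]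
  -- pointwise inequality
  have key : ∀ t ∈ Set.Icc (0:ℝ) 1,
      ‖gradient (fun y => φ (t, y)) (γ t)‖ * ‖γ' t‖ ≤ -dtφ (t, γ t) + dα * g t := by
    intro t ht
    have hm : 0 < -dtφ (t, γ t) := neg_pos.2 (hneg (t, γ t))
    have := hj_pointwise hα0 hα1 hdα hm (norm_nonneg (gradient (fun y => φ (t, y)) (γ t)))
      (norm_nonneg (γ' t))
    rw [hg]
    simp only
    rw [hA (t, γ t)]
    exact this
  have hΦ'_le : ∀ t ∈ Set.Icc (0:ℝ) 1, Φ' t ≤ dα * g t := by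
    intro t ht
    rw [hΦ'_eq t]
    have h1 := real_inner_le_norm (gradient (fun y => φ (t, y)) (γ t)) (γ' t)
    have h2 := key t ht
    linarith
  have hΦ'_abs : ∀ t ∈ Set.Icc (0:ℝ) 1, |Φ' t| ≤ 2 * |dtφ (t, γ t)| + dα * g t := by
    intro t ht
    rw [hΦ'_eq t]
    have h1 := abs_real_inner_le_norm (gradient (fun y => φ (t, y)) (γ t)) (γ' t)
    have h2 := key t ht
    have h3 := abs_add_le (dtφ (t, γ t))
      (inner ℝ (gradient (fun y => φ (t, y)) (γ t)) (γ' t) : ℝ)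
    have h4 : -dtφ (t, γ t) ≤ |dtφ (t, γ t)| := neg_le_abs _
    linarith
  -- main estimate
  have main : ∀ a ∈ Set.Icc (0:ℝ) 1, ∀ b ∈ Set.Icc (0:ℝ) 1, a ≤ b →
      Φ b - Φ a ≤ dα * ∫ s in a..b, g s := by
    intro a ha b hb hab
    have hsub : Set.Icc a b ⊆ Set.Icc 0 1 := Set.Icc_subset_Icc ha.1 hb.2
    have huicc : Set.uIcc a b = Set.Icc a b := Set.uIcc_of_le hab
    have hio : Set.uIoc a b ⊆ Set.Icc 0 1 := by
      rw [Set.uIoc_of_le hab]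
      exact Set.Ioc_subset_Icc_self.trans hsub
    have hg_ab : IntervalIntegrable g volume a b := by
      apply hint.mono_set
      rw [huicc, Set.uIcc_of_le (zero_le_one : (0:ℝ) ≤ 1)]
      exact hsub
    set B : ℝ → ℝ := fun t => 2 * |dtφ (t, γ t)| + dα * g t with hB
    have hB_int : IntervalIntegrable B volume a b := by
      apply IntervalIntegrable.add
      · apply ContinuousOn.intervalIntegrable
        rw [huicc]
        exact continuousOn_const.mul ((hdtγ.mono hsub).abs)
      · exact hg_ab.const_mul dα
    have hmeas : AEStronglyMeasurable Φ' (volume.restrict (Set.uIoc a b)) := by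
      apply (measurable_deriv Φ).aestronglyMeasurable.congr
      filter_upwards [ae_restrict_mem measurableSet_uIoc] with t ht
      exact (hΦ t (hio ht)).deriv
    have hΦ'_int : IntervalIntegrable Φ' volume a b := by
      apply hB_int.mono_fun hmeas
      filter_upwards [ae_restrict_mem measurableSet_uIoc] with t ht
      rw [Real.norm_eq_abs, Real.norm_eq_abs]
      exact (hΦ'_abs t (hio ht)).trans (le_abs_self _)
    have hftc : ∫ s in a..b, Φ' s = Φ b - Φ a := by
      apply intervalIntegral.integral_eq_sub_of_hasDerivAt
      · intro t ht
        rw [huicc] at ht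
        exact hΦ t (hsub ht)
      · exact hΦ'_int
    have hmono : (∫ s in a..b, Φ' s) ≤ ∫ s in a..b, dα * g s := by
      apply intervalIntegral.integral_mono_on hab hΦ'_int (hg_ab.const_mul dα)
      intro t ht
      exact hΦ'_le t (hsub ht)
    rw [intervalIntegral.integral_const_mul] at hmono
    linarith [hftc ▸ hmono]
  have hanti : AntitoneOn
      (fun t => φ (t, γ t) - dα * ∫ s in (0 : ℝ)..t, g s) (Set.Icc 0 1) := by
    intro a ha b hb hab
    simp only
    have h1 := main a ha b hb hab
    have i0a : IntervalIntegrable g volume 0 a := by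
      apply hint.mono_set
      rw [Set.uIcc_of_le ha.1, Set.uIcc_of_le (zero_le_one : (0:ℝ) ≤ 1)]
      exact Set.Icc_subset_Icc le_rfl ha.2
    have i0b : IntervalIntegrable g volume 0 b := by
      apply hint.mono_set
      rw [Set.uIcc_of_le hb.1, Set.uIcc_of_le (zero_le_one : (0:ℝ) ≤ 1)]
      exact Set.Icc_subset_Icc le_rfl hb.2
    have h2 : (∫ s in (0:ℝ)..b, g s) - ∫ s in (0:ℝ)..a, g s = ∫ s in a..b, g s :=
      intervalIntegral.integral_interval_sub_left i0b i0a
    have h4 : dα * (∫ s in (0:ℝ)..b, g s) - dα * (∫ s in (0:ℝ)..a, g s)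
        = dα * ∫ s in a..b, g s := by rw [← mul_sub, h2]
    have hΦa : Φ a = φ (a, γ a) := rfl
    have hΦb : Φ b = φ (b, γ b) := rfl
    rw [← hΦa, ← hΦb]
    linarith
  refine ⟨hanti, ?_⟩
  have h01 := hanti (Set.left_mem_Icc.2 zero_le_one) (Set.right_mem_Icc.2 zero_le_one) zero_le_one
  simp only [intervalIntegral.integral_same, mul_zero, sub_zero] at h01
  linarith
end

section
/- Let α ∈ (0,1) and let L(a,b) be defined on ℝ × ℝ^d by L(a,b) = κ_α (|b|^{2/α}/(−a))^{α/(1-α)} if a < 0, L(0,0) = 0, L = +∞ otherwise, with κ_α = (1-α)α^{α/(1-α)}/4^{1/(1-α)}. If (a,b) and (a',b') are two distinct points of ℝ_− × ℝ^d with L(a,b) < +∞ and L(a',b') < +∞, then L is strictly convex on the segment [(a,b),(a',b')] unless b = b' = 0. -/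
open Classical

open Real

private lemma norm_combo {E : Type*} [NormedAddCommGroup E] [InnerProductSpace ℝ E]
    (b b' : E) (t : ℝ) :
    ‖t • b + (1 - t) • b'‖ ^ 2
      = t * ‖b‖ ^ 2 + (1 - t) * ‖b'‖ ^ 2 - t * (1 - t) * ‖b - b'‖ ^ 2 := by
  have h1 := norm_add_sq_real (t • b) ((1 - t) • b')
  have h2 := norm_sub_sq_real b b'
  rw [real_inner_smul_left, real_inner_smul_right, norm_smul, norm_smul] at h1
  rw [h1, h2]
  simp only [Real.norm_eq_abs, mul_pow, sq_abs]
  ring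

private lemma persp_le {s : ℝ} (hs : 1 < s) {x x' u u' t : ℝ}
    (hx : 0 < x) (hx' : 0 < x') (hu : 0 ≤ u) (hu' : 0 ≤ u')
    (ht : 0 < t) (ht' : t < 1) :
    (t * u + (1 - t) * u') ^ s * (t * x + (1 - t) * x') ^ (1 - s)
      ≤ t * (u ^ s * x ^ (1 - s)) + (1 - t) * (u' ^ s * x' ^ (1 - s)) := by
  have ht1 : 0 < 1 - t := by linarith
  set X := t * x + (1 - t) * x' with hXdef
  have hX : 0 < X := add_pos (mul_pos ht hx) (mul_pos ht1 hx')
  have hA : 0 ≤ t * u + (1 - t) * u' := by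
    have := mul_nonneg ht.le hu; have := mul_nonneg ht1.le hu'; linarith
  have hww : t * x / X + (1 - t) * x' / X = 1 := by
    rw [← add_div, div_self hX.ne']
  have key := (strictConvexOn_rpow hs).convexOn.2 (Set.mem_Ici.2 (div_nonneg hu hx.le))
    (Set.mem_Ici.2 (div_nonneg hu' hx'.le)) (div_nonneg (mul_nonneg ht.le hx.le) hX.le)
    (div_nonneg (mul_nonneg ht1.le hx'.le) hX.le) hww
  simp only [smul_eq_mul] at key
  have hc : t * x / X * (u / x) + (1 - t) * x' / X * (u' / x') = (t * u + (1 - t) * u') / X := by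
    field_simp
  rw [hc] at key
  have hXs : (0:ℝ) < X ^ s := rpow_pos_of_pos hX s
  have hxs : (0:ℝ) < x ^ s := rpow_pos_of_pos hx s
  have hx's : (0:ℝ) < x' ^ s := rpow_pos_of_pos hx' s
  have hX1s : X ^ (1 - s) = X / X ^ s := by rw [Real.rpow_sub hX, Real.rpow_one]
  have hx1s : x ^ (1 - s) = x / x ^ s := by rw [Real.rpow_sub hx, Real.rpow_one]
  have hx'1s : x' ^ (1 - s) = x' / x' ^ s := by rw [Real.rpow_sub hx', Real.rpow_one]
  calc (t * u + (1 - t) * u') ^ s * X ^ (1 - s)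
      = X * (((t * u + (1 - t) * u') / X) ^ s) := by
        rw [Real.div_rpow hA hX.le, hX1s]; field_simp
    _ ≤ X * (t * x / X * (u / x) ^ s + (1 - t) * x' / X * (u' / x') ^ s) :=
        mul_le_mul_of_nonneg_left key hX.le
    _ = t * (u ^ s * x ^ (1 - s)) + (1 - t) * (u' ^ s * x' ^ (1 - s)) := by
        rw [Real.div_rpow hu hx.le, Real.div_rpow hu' hx'.le, hx1s, hx'1s]
        field_simp

private lemma persp_lt {s : ℝ} (hs : 1 < s) {x x' u u' t : ℝ}
    (hx : 0 < x) (hx' : 0 < x') (hu : 0 ≤ u) (hu' : 0 ≤ u')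
    (ht : 0 < t) (ht' : t < 1) (hne : u / x ≠ u' / x') :
    (t * u + (1 - t) * u') ^ s * (t * x + (1 - t) * x') ^ (1 - s)
      < t * (u ^ s * x ^ (1 - s)) + (1 - t) * (u' ^ s * x' ^ (1 - s)) := by
  have ht1 : 0 < 1 - t := by linarith
  set X := t * x + (1 - t) * x' with hXdef
  have hX : 0 < X := add_pos (mul_pos ht hx) (mul_pos ht1 hx')
  have hA : 0 ≤ t * u + (1 - t) * u' := by
    have := mul_nonneg ht.le hu; have := mul_nonneg ht1.le hu'; linarith
  have hww : t * x / X + (1 - t) * x' / X = 1 := by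
    rw [← add_div, div_self hX.ne']
  have key := (strictConvexOn_rpow hs).2 (Set.mem_Ici.2 (div_nonneg hu hx.le))
    (Set.mem_Ici.2 (div_nonneg hu' hx'.le)) hne (div_pos (mul_pos ht hx) hX)
    (div_pos (mul_pos ht1 hx') hX) hww
  simp only [smul_eq_mul] at key
  have hc : t * x / X * (u / x) + (1 - t) * x' / X * (u' / x') = (t * u + (1 - t) * u') / X := by
    field_simp
  rw [hc] at key
  have hXs : (0:ℝ) < X ^ s := rpow_pos_of_pos hX s
  have hxs : (0:ℝ) < x ^ s := rpow_pos_of_pos hx s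
  have hx's : (0:ℝ) < x' ^ s := rpow_pos_of_pos hx' s
  have hX1s : X ^ (1 - s) = X / X ^ s := by rw [Real.rpow_sub hX, Real.rpow_one]
  have hx1s : x ^ (1 - s) = x / x ^ s := by rw [Real.rpow_sub hx, Real.rpow_one]
  have hx'1s : x' ^ (1 - s) = x' / x' ^ s := by rw [Real.rpow_sub hx', Real.rpow_one]
  calc (t * u + (1 - t) * u') ^ s * X ^ (1 - s)
      = X * (((t * u + (1 - t) * u') / X) ^ s) := by
        rw [Real.div_rpow hA hX.le, hX1s]; field_simp
    _ < X * (t * x / X * (u / x) ^ s + (1 - t) * x' / X * (u' / x') ^ s) :=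
        (mul_lt_mul_iff_right₀ hX).2 key
    _ = t * (u ^ s * x ^ (1 - s)) + (1 - t) * (u' ^ s * x' ^ (1 - s)) := by
        rw [Real.div_rpow hu hx.le, Real.div_rpow hu' hx'.le, hx1s, hx'1s]
        field_simp

private lemma caseA {s κ x x' u u' w t : ℝ} (hs : 1 < s) (hκ : 0 < κ)
    (hx : 0 < x) (hx' : 0 < x') (hu : 0 ≤ u) (hu' : 0 ≤ u')
    (ht : 0 < t) (ht' : t < 1)
    (hw : 0 ≤ w) (hwle : w ≤ t * u + (1 - t) * u')
    (hstrict : w < t * u + (1 - t) * u' ∨ u / x ≠ u' / x') :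
    κ * (w ^ s * (t * x + (1 - t) * x') ^ (1 - s))
      < t * (κ * (u ^ s * x ^ (1 - s))) + (1 - t) * (κ * (u' ^ s * x' ^ (1 - s))) := by
  have ht1 : 0 < 1 - t := by linarith
  have hX : 0 < t * x + (1 - t) * x' := add_pos (mul_pos ht hx) (mul_pos ht1 hx')
  have hXp : 0 < (t * x + (1 - t) * x') ^ (1 - s) := rpow_pos_of_pos hX _
  have hmain : w ^ s * (t * x + (1 - t) * x') ^ (1 - s)
      < t * (u ^ s * x ^ (1 - s)) + (1 - t) * (u' ^ s * x' ^ (1 - s)) := by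
    rcases lt_or_eq_of_le hwle with hlt | heq
    · calc w ^ s * (t * x + (1 - t) * x') ^ (1 - s)
          < (t * u + (1 - t) * u') ^ s * (t * x + (1 - t) * x') ^ (1 - s) := by
            exact mul_lt_mul_of_pos_right (Real.rpow_lt_rpow hw hlt (by linarith)) hXp
        _ ≤ _ := persp_le hs hx hx' hu hu' ht ht'
    · have hne := hstrict.resolve_left (by rw [heq]; exact lt_irrefl _)
      rw [heq]
      exact persp_lt hs hx hx' hu hu' ht ht' hne
  calc κ * (w ^ s * (t * x + (1 - t) * x') ^ (1 - s))
      < κ * (t * (u ^ s * x ^ (1 - s)) + (1 - t) * (u' ^ s * x' ^ (1 - s))) :=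
        (mul_lt_mul_iff_right₀ hκ).2 hmain
    _ = t * (κ * (u ^ s * x ^ (1 - s))) + (1 - t) * (κ * (u' ^ s * x' ^ (1 - s))) := by ring

private lemma caseB {s κ x' u' t : ℝ} (hs : 1 < s) (hκ : 0 < κ)
    (hx' : 0 < x') (hu' : 0 < u') (ht : 0 < t) (ht' : t < 1) :
    κ * ((t ^ 2 * u') ^ s * (t * x') ^ (1 - s)) < t * (κ * (u' ^ s * x' ^ (1 - s))) := by
  have h1 : (t ^ 2 * u') ^ s = (t ^ 2) ^ s * u' ^ s := Real.mul_rpow (sq_nonneg t) hu'.le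
  have h2 : (t * x') ^ (1 - s) = t ^ (1 - s) * x' ^ (1 - s) := Real.mul_rpow ht.le hx'.le
  have h3 : ((t ^ 2 : ℝ)) ^ s = t ^ ((2 : ℝ) * s) := by
    rw [← Real.rpow_natCast t 2, ← Real.rpow_mul ht.le]
    norm_num
  have h4 : t ^ ((2 : ℝ) * s) * t ^ (1 - s) = t ^ (s + 1) := by
    rw [← Real.rpow_add ht]; ring_nf
  have h5 : t ^ (s + 1) < t := by
    nth_rewrite 2 [← Real.rpow_one t]
    exact Real.rpow_lt_rpow_of_exponent_gt ht ht' (by linarith)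
  have h6 : 0 < u' ^ s * x' ^ (1 - s) :=
    mul_pos (rpow_pos_of_pos hu' s) (rpow_pos_of_pos hx' _)
  have e : (t ^ 2 * u') ^ s * (t * x') ^ (1 - s) = t ^ (s + 1) * (u' ^ s * x' ^ (1 - s)) := by
    rw [h1, h2, h3, ← h4]; ring
  calc κ * ((t ^ 2 * u') ^ s * (t * x') ^ (1 - s))
      = t ^ (s + 1) * (κ * (u' ^ s * x' ^ (1 - s))) := by rw [e]; ring
    _ < t * (κ * (u' ^ s * x' ^ (1 - s))) :=
        mul_lt_mul_of_pos_right h5 (mul_pos hκ h6)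

private lemma Lfun_eq (d : ℕ) {α : ℝ} (hα0 : 0 < α) (hα1 : α < 1)
    {q : ℝ × EuclideanSpace ℝ (Fin d)} (hq : q.1 < 0) :
    Lfun d α q = ((((1 - α) * α ^ (α / (1 - α)) / 4 ^ ((1 : ℝ) / (1 - α))) *
      ((‖q.2‖ ^ 2) ^ ((1:ℝ) / (1 - α)) * (-q.1) ^ (1 - (1:ℝ) / (1 - α))) : ℝ) : EReal) := by
  rw [Lfun, if_pos hq]
  congr 1
  have h1α : (0:ℝ) < 1 - α := by linarith
  have hx : (0:ℝ) < -q.1 := by linarith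
  have h1 : (‖q.2‖ ^ ((2:ℝ) / α) / (-q.1)) ^ (α / (1 - α))
      = (‖q.2‖ ^ 2) ^ ((1:ℝ) / (1 - α)) * (-q.1) ^ (1 - (1:ℝ) / (1 - α)) := by
    rw [Real.div_rpow (rpow_nonneg (norm_nonneg _) _) hx.le]
    have e0 : (‖q.2‖ ^ ((2:ℝ) / α)) ^ (α / (1 - α)) = ‖q.2‖ ^ ((2:ℝ) / α * (α / (1 - α))) :=
      (Real.rpow_mul (norm_nonneg _) _ _).symm
    have e1 : (2:ℝ) / α * (α / (1 - α)) = 2 * ((1:ℝ) / (1 - α)) := by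
      field_simp
    have e2 : ‖q.2‖ ^ ((2:ℝ) * ((1:ℝ) / (1 - α))) = (‖q.2‖ ^ 2) ^ ((1:ℝ) / (1 - α)) := by
      rw [Real.rpow_mul (norm_nonneg _)]
      norm_num [Real.rpow_natCast]
    have e3 : (1:ℝ) - 1 / (1 - α) = -(α / (1 - α)) := by field_simp; ring
    rw [e0, e1, e2, e3, Real.rpow_neg hx.le, div_eq_mul_inv]
  rw [h1]

/-- if `(a,b) ≠ (a',b')` are two points of `ℝ₋ × ℝ^d` where `L` is finite,
and not both `b = 0` and `b' = 0`, then `L` is strictly convex on the segment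
`[(a,b),(a',b')]`. -/
theorem Lfun_strictConvexOn_segment (d : ℕ) (hd : 1 ≤ d) (α : ℝ) (hα0 : 0 < α) (hα1 : α < 1)
    (p q : ℝ × EuclideanSpace ℝ (Fin d)) (hpq : p ≠ q)
    (hp : p.1 ≤ 0) (hq : q.1 ≤ 0)
    (hLp : Lfun d α p ≠ ⊤) (hLq : Lfun d α q ≠ ⊤)
    (hb : ¬(p.2 = 0 ∧ q.2 = 0)) :
    ∀ t : ℝ, 0 < t → t < 1 →
      Lfun d α (t • p + (1 - t) • q) <
        (t : EReal) * Lfun d α p + ((1 - t : ℝ) : EReal) * Lfun d α q := by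
  intro t ht0 ht1
  have h1α : (0:ℝ) < 1 - α := by linarith
  have ht1' : (0:ℝ) < 1 - t := by linarith
  have hs : 1 < (1:ℝ) / (1 - α) := (one_lt_div h1α).2 (by linarith)
  have hκ : 0 < (1 - α) * α ^ (α / (1 - α)) / 4 ^ ((1 : ℝ) / (1 - α)) :=
    div_pos (mul_pos h1α (rpow_pos_of_pos hα0 _)) (rpow_pos_of_pos (by norm_num) _)
  have hr1 : (t • p + (1 - t) • q).1 = t * p.1 + (1 - t) * q.1 := by
    simp [smul_eq_mul]
  have hr2 : (t • p + (1 - t) • q).2 = t • p.2 + (1 - t) • q.2 := by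
    simp
  have classify : ∀ r : ℝ × EuclideanSpace ℝ (Fin d), r.1 ≤ 0 → Lfun d α r ≠ ⊤ →
      r.1 < 0 ∨ (r.1 = 0 ∧ r.2 = 0) := by
    intro r hr hLr
    rcases lt_or_eq_of_le hr with h | h
    · exact Or.inl h
    · by_cases h2 : r.2 = 0
      · exact Or.inr ⟨h, h2⟩
      · exfalso; apply hLr
        rw [Lfun, if_neg (by simp [h]), if_neg (by tauto)]
  rcases classify p hp hLp with hp1 | hp0
  · rcases classify q hq hLq with hq1 | hq0
    · -- both interior
      have hx : (0:ℝ) < -p.1 := by linarith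
      have hx' : (0:ℝ) < -q.1 := by linarith
      have hc1 : (t • p + (1 - t) • q).1 < 0 := by
        rw [hr1]; nlinarith [mul_pos ht0 hx, mul_pos ht1' hx']
      rw [Lfun_eq d hα0 hα1 hp1, Lfun_eq d hα0 hα1 hq1, Lfun_eq d hα0 hα1 hc1,
        ← EReal.coe_mul, ← EReal.coe_mul, ← EReal.coe_add, EReal.coe_lt_coe_iff, hr1, hr2]
      have e : -(t * p.1 + (1 - t) * q.1) = t * (-p.1) + (1 - t) * (-q.1) := by ring
      rw [e]
      have hwle : ‖t • p.2 + (1 - t) • q.2‖ ^ 2 ≤ t * ‖p.2‖ ^ 2 + (1 - t) * ‖q.2‖ ^ 2 := by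
        have h0 := norm_combo p.2 q.2 t
        nlinarith [sq_nonneg ‖p.2 - q.2‖, mul_pos ht0 ht1']
      have hstrict : ‖t • p.2 + (1 - t) • q.2‖ ^ 2 < t * ‖p.2‖ ^ 2 + (1 - t) * ‖q.2‖ ^ 2 ∨
          ‖p.2‖ ^ 2 / (-p.1) ≠ ‖q.2‖ ^ 2 / (-q.1) := by
        by_cases hbb : p.2 = q.2
        · right
          have hbne : p.2 ≠ 0 := by
            intro h0; exact hb ⟨h0, by rw [← hbb]; exact h0⟩
          have hu0 : (0:ℝ) < ‖p.2‖ ^ 2 := pow_pos (norm_pos_iff.mpr hbne) 2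
          have hxx : p.1 ≠ q.1 := by
            intro h0; exact hpq (Prod.ext h0 hbb)
          rw [← hbb]
          intro h0
          rw [div_eq_div_iff hx.ne' hx'.ne'] at h0
          have := mul_left_cancel₀ hu0.ne' h0
          exact hxx (by linarith)
        · left
          have h0 := norm_combo p.2 q.2 t
          have h3 : 0 < ‖p.2 - q.2‖ ^ 2 :=
            pow_pos (norm_pos_iff.mpr (sub_ne_zero_of_ne hbb)) 2
          nlinarith [mul_pos (mul_pos ht0 ht1') h3]
      exact caseA hs hκ hx hx' (sq_nonneg _) (sq_nonneg _) ht0 ht1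
        (sq_nonneg _) hwle hstrict
    · -- q = 0, p interior
      have hbp : p.2 ≠ 0 := by
        intro h0; exact hb ⟨h0, hq0.2⟩
      have hc1 : (t • p + (1 - t) • q).1 < 0 := by
        rw [hr1, hq0.1]; nlinarith [mul_pos ht0 (by linarith : (0:ℝ) < -p.1)]
      have hLq0 : Lfun d α q = 0 := by
        rw [Lfun, if_neg (by simp [hq0.1]), if_pos hq0]
      rw [hLq0, mul_zero, add_zero, Lfun_eq d hα0 hα1 hp1, Lfun_eq d hα0 hα1 hc1,
        ← EReal.coe_mul, EReal.coe_lt_coe_iff, hr1, hr2, hq0.1, hq0.2]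
      have e1 : ‖t • p.2 + (1 - t) • (0 : EuclideanSpace ℝ (Fin d))‖ ^ 2
          = t ^ 2 * ‖p.2‖ ^ 2 := by
        rw [smul_zero, add_zero, norm_smul, Real.norm_eq_abs, abs_of_pos ht0]; ring
      have e2 : -(t * p.1 + (1 - t) * 0) = t * (-p.1) := by ring
      rw [e1, e2]
      exact caseB hs hκ (by linarith) (pow_pos (norm_pos_iff.mpr hbp) 2) ht0 ht1
  · rcases classify q hq hLq with hq1 | hq0
    · -- p = 0, q interior
      have hbq : q.2 ≠ 0 := by
        intro h0; exact hb ⟨hp0.2, h0⟩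
      have hc1 : (t • p + (1 - t) • q).1 < 0 := by
        rw [hr1, hp0.1]; nlinarith [mul_pos ht1' (by linarith : (0:ℝ) < -q.1)]
      have hLp0 : Lfun d α p = 0 := by
        rw [Lfun, if_neg (by simp [hp0.1]), if_pos hp0]
      rw [hLp0, mul_zero, zero_add, Lfun_eq d hα0 hα1 hq1, Lfun_eq d hα0 hα1 hc1,
        ← EReal.coe_mul, EReal.coe_lt_coe_iff, hr1, hr2, hp0.1, hp0.2]
      have e1 : ‖t • (0 : EuclideanSpace ℝ (Fin d)) + (1 - t) • q.2‖ ^ 2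
          = (1 - t) ^ 2 * ‖q.2‖ ^ 2 := by
        rw [smul_zero, zero_add, norm_smul, Real.norm_eq_abs, abs_of_pos ht1']; ring
      have e2 : -(t * 0 + (1 - t) * q.1) = (1 - t) * (-q.1) := by ring
      rw [e1, e2]
      exact caseB hs hκ (by linarith) (pow_pos (norm_pos_iff.mpr hbq) 2) ht1' (by linarith)
    · -- both zero: p = q, contradiction
      exact absurd (Prod.ext (hp0.1.trans hq0.1.symm) (hp0.2.trans hq0.2.symm)) hpq
end

section
/- Let α ∈ (0,1). For every ρ ≥ 0 and w ∈ ℝ^d with H(ρ,w) < ∞ (H(ρ,w) = |w|²/ρ^α for ρ > 0, H(0,0) = 0), and for every (a,b) ∈ ∂H(ρ,w), Fenchel equality holds: H(ρ,w) + L(a,b) = aρ + ⟨b,w⟩, where L is the conjugate of H. Conversely, if H(ρ,w) + L(a,b) = aρ + ⟨b,w⟩ with both sides finite, then (a,b) ∈ ∂H(ρ,w); in particular then w = (1/2)ρ^α b, and if ρ > 0 then a = −(α/4) ρ^{α−1}|b|². -/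
open scoped RealInnerProductSpace
open Classical


noncomputable def Kval (α a c : ℝ) : ℝ :=
  (1 - α) * α ^ (α / (1 - α)) * c ^ ((1 : ℝ) / (1 - α)) * (-a) ^ (-(α / (1 - α)))

lemma youngK {α a c t : ℝ} (hα0 : 0 < α) (hα1 : α < 1) (ha : a < 0) (hc : 0 ≤ c)
    (ht : 0 < t) : a * t + c * t ^ α ≤ Kval α a c := by
  have h1α : 0 < 1 - α := by linarith
  have hna : 0 < -a := by linarith
  rcases eq_or_lt_of_le hc with hc0 | hc
  · have : Kval α a c = 0 := by
      have hz : (0:ℝ) ^ ((1:ℝ)/(1-α)) = 0 := Real.zero_rpow (by positivity)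
      rw [Kval, ← hc0, hz]; ring
    rw [this, ← hc0]
    nlinarith
  · set β := α / (1 - α) with hβ
    have hβpos : 0 < β := by positivity
    set A : ℝ := (-a) * t / α with hA
    set B : ℝ := α ^ β * c ^ ((1:ℝ)/(1-α)) * (-a) ^ (-β) with hB
    have hApos : 0 < A := by positivity
    have hBpos : 0 < B := by positivity
    have hgm : A ^ α * B ^ (1 - α) ≤ α * A + (1 - α) * B :=
      Real.geom_mean_le_arith_mean2_weighted hα0.le h1α.le hApos.le hBpos.le (by ring)
    have hAα : A ^ α = (-a) ^ α * t ^ α * α ^ (-α) := by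
      rw [hA, div_eq_mul_inv, Real.mul_rpow (by positivity) (by positivity),
        Real.mul_rpow hna.le ht.le, Real.rpow_neg hα0.le, Real.inv_rpow hα0.le]
    have hB1α : B ^ (1 - α) = α ^ α * c * (-a) ^ (-α) := by
      rw [hB, Real.mul_rpow (by positivity) (by positivity),
        Real.mul_rpow (by positivity) (by positivity),
        ← Real.rpow_mul hα0.le, ← Real.rpow_mul hc.le, ← Real.rpow_mul hna.le]
      have e1 : β * (1 - α) = α := by rw [hβ]; field_simp
      have e2 : (1:ℝ)/(1-α) * (1-α) = 1 := by field_simp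
      have e3 : -β * (1 - α) = -α := by rw [hβ]; field_simp
      rw [e1, e2, e3, Real.rpow_one]
    have hprod : A ^ α * B ^ (1 - α) = c * t ^ α := by
      rw [hAα, hB1α]
      have h1 : (-a) ^ α * (-a) ^ (-α) = 1 := by
        rw [← Real.rpow_add hna]; simp
      have h2 : α ^ (-α) * α ^ α = 1 := by
        rw [← Real.rpow_add hα0]; simp
      calc (-a) ^ α * t ^ α * α ^ (-α) * (α ^ α * c * (-a) ^ (-α))
          = ((-a) ^ α * (-a) ^ (-α)) * (α ^ (-α) * α ^ α) * (c * t ^ α) := by ring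
        _ = c * t ^ α := by rw [h1, h2]; ring
    have hαA : α * A = (-a) * t := by rw [hA]; field_simp
    have hKB : Kval α a c = (1 - α) * B := by rw [Kval, hB]; ring
    rw [hKB]
    rw [hprod, hαA] at hgm
    linarith

lemma youngK_eq {α a c : ℝ} (hα0 : 0 < α) (hα1 : α < 1) (ha : a < 0) (hc : 0 < c) :
    a * (α * c / (-a)) ^ ((1:ℝ)/(1-α)) + c * ((α * c / (-a)) ^ ((1:ℝ)/(1-α))) ^ α
      = Kval α a c := by
  have h1α : 0 < 1 - α := by linarith
  have hna : 0 < -a := by linarith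
  set β := α / (1 - α) with hβ
  set u : ℝ := α * c / (-a) with hu
  have hupos : 0 < u := by positivity
  have htα : (u ^ ((1:ℝ)/(1-α))) ^ α = u ^ β := by
    rw [← Real.rpow_mul hupos.le]
    congr 1
    rw [hβ]; field_simp
  have ht : u ^ ((1:ℝ)/(1-α)) = u ^ β * u := by
    rw [← Real.rpow_add_one hupos.ne' β]
    congr 1
    rw [hβ]; field_simp; ring
  have hau : a * u = -(α * c) := by
    rw [hu]; field_simp; ring_nf; simp [ha.ne]
  have huβ : u ^ β = α ^ β * c ^ β * (-a) ^ (-β) := by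
    rw [hu, div_eq_mul_inv, Real.mul_rpow (by positivity) (by positivity),
      Real.mul_rpow hα0.le hc.le, Real.inv_rpow hna.le, ← Real.rpow_neg hna.le]
  have hcβ : c ^ β * c = c ^ ((1:ℝ)/(1-α)) := by
    rw [← Real.rpow_add_one hc.ne' β]
    congr 1
    rw [hβ]; field_simp; ring
  calc a * u ^ ((1:ℝ)/(1-α)) + c * (u ^ ((1:ℝ)/(1-α))) ^ α
      = u ^ β * (a * u + c) := by rw [htα, ht]; ring
    _ = u ^ β * (c * (1 - α)) := by rw [hau]; ring
    _ = (1 - α) * α ^ β * (c ^ β * c) * (-a) ^ (-β) := by rw [huβ]; ring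
    _ = Kval α a c := by rw [hcβ, Kval]

lemma young_uniq {α a c ρ : ℝ} (hα0 : 0 < α) (hα1 : α < 1) (ha : a < 0) (hc : 0 < c)
    (hρ : 0 < ρ) (heq : a * ρ + c * ρ ^ α = Kval α a c) :
    ρ = (α * c / (-a)) ^ ((1:ℝ)/(1-α)) := by
  have hna : 0 < -a := by linarith
  set t : ℝ := (α * c / (-a)) ^ ((1:ℝ)/(1-α)) with htdef
  have htpos : 0 < t := by positivity
  by_contra hne
  set m : ℝ := (1/2 : ℝ) * ρ + (1/2 : ℝ) * t with hm
  have hmpos : 0 < m := by positivity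
  have hsc := (Real.strictConcaveOn_rpow hα0 hα1).2 (Set.mem_Ici.2 hρ.le)
    (Set.mem_Ici.2 htpos.le) hne (by norm_num : (0:ℝ) < 1/2) (by norm_num : (0:ℝ) < 1/2)
    (by norm_num)
  simp only [smul_eq_mul] at hsc
  have hteq : a * t + c * t ^ α = Kval α a c := youngK_eq hα0 hα1 ha hc
  have hmle : a * m + c * m ^ α ≤ Kval α a c := youngK hα0 hα1 ha hc.le hmpos
  rw [hm] at hmle
  nlinarith [hsc, hteq, heq, hmle]

lemma K_form {α a x : ℝ} (hα0 : 0 < α) (hα1 : α < 1) (ha : a < 0) (hx : 0 ≤ x) :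
    Kval α a (x ^ 2 / 4)
      = ((1 - α) * α ^ (α / (1 - α)) / 4 ^ ((1 : ℝ) / (1 - α))) *
        (x ^ ((2 : ℝ) / α) / (-a)) ^ (α / (1 - α)) := by
  have h1α : 0 < 1 - α := by linarith
  have hna : 0 < -a := by linarith
  set β := α / (1 - α) with hβ
  rcases eq_or_lt_of_le hx with hx0 | hx
  · rw [← hx0]
    have e1 : ((0:ℝ) ^ 2 / 4) = 0 := by norm_num
    have e2 : (0:ℝ) ^ ((2:ℝ)/α) = 0 := Real.zero_rpow (by positivity)
    rw [e1, e2, Kval, Real.zero_rpow (by positivity : (1:ℝ)/(1-α) ≠ 0), zero_div,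
      Real.zero_rpow (by positivity : β ≠ 0)]
    ring
  · have hx2 : (x : ℝ) ^ 2 = x ^ (2:ℝ) := by
      rw [← Real.rpow_natCast x 2]; norm_num
    have hL : (x ^ 2 / 4 : ℝ) ^ ((1:ℝ)/(1-α))
        = x ^ ((2:ℝ)/(1-α)) * 4 ^ (-((1:ℝ)/(1-α))) := by
      rw [div_eq_mul_inv, Real.mul_rpow (by positivity) (by positivity),
        Real.inv_rpow (by norm_num), ← Real.rpow_neg (by norm_num), hx2,
        ← Real.rpow_mul hx.le]
      congr 2
      ring
    have hR : (x ^ ((2:ℝ)/α) / (-a)) ^ β = x ^ ((2:ℝ)/(1-α)) * (-a) ^ (-β) := by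
      rw [div_eq_mul_inv, Real.mul_rpow (by positivity) (by positivity),
        Real.inv_rpow hna.le, ← Real.rpow_neg hna.le, ← Real.rpow_mul hx.le]
      congr 2
      rw [hβ]; field_simp
    rw [Kval, hL, hR]
    have h4 : (4:ℝ) ^ (-((1:ℝ)/(1-α))) = ((4:ℝ) ^ ((1:ℝ)/(1-α)))⁻¹ :=
      Real.rpow_neg (by norm_num) _
    rw [h4, div_eq_mul_inv, hβ]
    ring

lemma inner_quad {d : ℕ} (b w' : EuclideanSpace ℝ (Fin d)) {s : ℝ} (hs : 0 < s) :
    ⟪b, w'⟫ ≤ ‖w'‖ ^ 2 / s + s * ‖b‖ ^ 2 / 4 := by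
  have h1 : ⟪b, w'⟫ ≤ ‖b‖ * ‖w'‖ := real_inner_le_norm b w'
  have h2 : ‖b‖ * ‖w'‖ ≤ (‖w'‖ ^ 2 + s ^ 2 * ‖b‖ ^ 2 / 4) / s := by
    rw [le_div_iff₀ hs]
    nlinarith [sq_nonneg (‖w'‖ - s * ‖b‖ / 2)]
  have h3 : (‖w'‖ ^ 2 + s ^ 2 * ‖b‖ ^ 2 / 4) / s = ‖w'‖ ^ 2 / s + s * ‖b‖ ^ 2 / 4 := by
    field_simp
  linarith

lemma inner_quad_eq {d : ℕ} (b w' : EuclideanSpace ℝ (Fin d)) {s : ℝ} (hs : 0 < s)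
    (heq : ⟪b, w'⟫ = ‖w'‖ ^ 2 / s + s * ‖b‖ ^ 2 / 4) :
    w' = ((1:ℝ)/2 * s) • b := by
  have hn : ‖w' - ((1:ℝ)/2 * s) • b‖ ^ 2
      = ‖w'‖ ^ 2 - s * ⟪b, w'⟫ + s ^ 2 * ‖b‖ ^ 2 / 4 := by
    rw [norm_sub_sq_real, real_inner_smul_right, norm_smul, Real.norm_eq_abs,
      abs_of_pos (by positivity : (0:ℝ) < 1/2 * s), real_inner_comm]
    ring
  have hz : ‖w' - ((1:ℝ)/2 * s) • b‖ ^ 2 = 0 := by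
    rw [hn, heq]
    field_simp
    ring
  have := pow_eq_zero_iff (n := 2) (by norm_num) |>.1 hz
  have := norm_eq_zero.1 this
  have := sub_eq_zero.1 this
  exact this

lemma Kval_nonneg {α a c : ℝ} (hα0 : 0 < α) (hα1 : α < 1) (ha : a < 0) (hc : 0 ≤ c) :
    0 ≤ Kval α a c := by
  have h1α : (0:ℝ) ≤ 1 - α := by linarith
  have hna : (0:ℝ) ≤ -a := by linarith
  exact mul_nonneg (mul_nonneg (mul_nonneg h1α (Real.rpow_nonneg hα0.le _))
    (Real.rpow_nonneg hc _)) (Real.rpow_nonneg hna _)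

lemma Kval_zero {α a : ℝ} (hα0 : 0 < α) (hα1 : α < 1) : Kval α a 0 = 0 := by
  have h1α : (0:ℝ) < 1 - α := by linarith
  rw [Kval, Real.zero_rpow (by positivity : (1:ℝ)/(1-α) ≠ 0)]
  ring

/-- The convex subdifferential of `H` at `p`. -/
def subdiffH (d : ℕ) (α : ℝ) (p : ℝ × EuclideanSpace ℝ (Fin d)) :
    Set (ℝ × EuclideanSpace ℝ (Fin d)) :=
  {q | ∀ p' : ℝ × EuclideanSpace ℝ (Fin d),
    Hfun d α p + ((q.1 * (p'.1 - p.1) + ⟪q.2, p'.2 - p.2⟫ : ℝ) : EReal) ≤ Hfun d α p'}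


lemma Hfun_pos {d : ℕ} {α t : ℝ} (v : EuclideanSpace ℝ (Fin d)) (ht : 0 < t) :
    Hfun d α (t, v) = ((‖v‖ ^ 2 / t ^ α : ℝ) : EReal) := by
  simp [Hfun, ht]

lemma Hfun_zero {d : ℕ} {α : ℝ} :
    Hfun d α (0, (0 : EuclideanSpace ℝ (Fin d))) = ((0 : ℝ) : EReal) := by
  simp [Hfun]

lemma Hfun_top {d : ℕ} {α ρ' : ℝ} {w' : EuclideanSpace ℝ (Fin d)}
    (h1 : ¬ 0 < ρ') (h2 : ¬ (ρ' = 0 ∧ w' = 0)) : Hfun d α (ρ', w') = ⊤ := by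
  simp [Hfun, h1, h2]

set_option maxHeartbeats 1000000 in
/-- Fenchel (Young) equality. If `ρ ≥ 0`, `H(ρ,w) < ∞` and
`(a,b) ∈ ∂H(ρ,w)`, then `H(ρ,w) + L(a,b) = aρ + ⟨b,w⟩`. Conversely, if the equality
holds with both sides finite, then `(a,b) ∈ ∂H(ρ,w)`; in particular `w = (1/2)ρ^α b`
and, if `ρ > 0`, `a = −(α/4) ρ^{α−1} |b|²`. -/
theorem fenchel_equality (d : ℕ) (hd : 1 ≤ d) (α : ℝ) (hα0 : 0 < α) (hα1 : α < 1)
    (ρ : ℝ) (w : EuclideanSpace ℝ (Fin d)) (hρ : 0 ≤ ρ) (hH : Hfun d α (ρ, w) ≠ ⊤)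
    (a : ℝ) (b : EuclideanSpace ℝ (Fin d)) :
    ((a, b) ∈ subdiffH d α (ρ, w) →
      Hfun d α (ρ, w) + Lfun d α (a, b) = ((a * ρ + ⟪b, w⟫ : ℝ) : EReal)) ∧
    (Lfun d α (a, b) ≠ ⊤ →
      Hfun d α (ρ, w) + Lfun d α (a, b) = ((a * ρ + ⟪b, w⟫ : ℝ) : EReal) →
      (a, b) ∈ subdiffH d α (ρ, w) ∧
        w = ((1 : ℝ) / 2 * ρ ^ α) • b ∧
        (0 < ρ → a = -(α / 4) * ρ ^ (α - 1) * ‖b‖ ^ 2)) := by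
  have h1α : (0:ℝ) < 1 - α := by linarith
  have hcase : 0 < ρ ∨ (ρ = 0 ∧ w = 0) := by
    rcases lt_or_eq_of_le hρ with h | h
    · exact Or.inl h
    · refine Or.inr ⟨h.symm, ?_⟩
      by_contra hw
      exact hH (Hfun_top (by simp [← h]) (by simp [← h.symm, hw]))
  set hr : ℝ := if 0 < ρ then ‖w‖ ^ 2 / ρ ^ α else 0 with hrdef
  have hHval : Hfun d α (ρ, w) = (hr : EReal) := by
    rcases hcase with h | ⟨h0, hw0⟩
    · rw [Hfun_pos w h, hrdef, if_pos h]
    · rw [hrdef, if_neg (by rw [h0]; exact lt_irrefl 0), h0, hw0, Hfun_zero]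
  have hrnn : 0 ≤ hr := by
    rw [hrdef]; split_ifs with h
    · positivity
    · exact le_refl 0
  constructor
  · -- Part 1: subgradient implies equality
    intro hsub
    simp only [subdiffH, Set.mem_setOf_eq] at hsub
    have hsub' : ∀ (t : ℝ) (v : EuclideanSpace ℝ (Fin d)),
        Hfun d α (ρ, w) + ((a * (t - ρ) + ⟪b, v - w⟫ : ℝ) : EReal) ≤ Hfun d α (t, v) :=
      fun t v => hsub (t, v)
    have key : ∀ t : ℝ, 0 < t →
        a * t + t ^ α * ‖b‖ ^ 2 / 4 ≤ a * ρ + ⟪b, w⟫ - hr := by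
      intro t ht
      have h := hsub' t (((1:ℝ)/2 * t ^ α) • b)
      rw [hHval, Hfun_pos _ ht, ← EReal.coe_add, EReal.coe_le_coe_iff] at h
      have hnrm : ‖((1:ℝ)/2 * t ^ α) • b‖ ^ 2 = ((1:ℝ)/2 * t ^ α) ^ 2 * ‖b‖ ^ 2 := by
        rw [norm_smul, mul_pow, Real.norm_eq_abs, sq_abs]
      have hip : ⟪b, ((1:ℝ)/2 * t ^ α) • b - w⟫ = (1:ℝ)/2 * t ^ α * ‖b‖ ^ 2 - ⟪b, w⟫ := by
        rw [inner_sub_right, real_inner_smul_right, real_inner_self_eq_norm_sq]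
      have htα : (0:ℝ) < t ^ α := Real.rpow_pos_of_pos ht α
      have hdiv : (((1:ℝ)/2 * t ^ α) ^ 2 * ‖b‖ ^ 2) / t ^ α = t ^ α * ‖b‖ ^ 2 / 4 := by
        field_simp
        ring
      rw [hip, hnrm, hdiv] at h
      linarith
    have key0 : hr ≤ a * ρ + ⟪b, w⟫ := by
      have h := hsub' 0 0
      rw [hHval, Hfun_zero, ← EReal.coe_add, EReal.coe_le_coe_iff] at h
      have hz : ⟪b, (0:EuclideanSpace ℝ (Fin d)) - w⟫ = -⟪b, w⟫ := by
        rw [zero_sub, inner_neg_right]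
      rw [hz] at h
      linarith
    have hsign : a < 0 ∨ (a = 0 ∧ b = 0) := by
      rcases lt_trichotomy a 0 with h | h | h
      · exact Or.inl h
      · subst h
        refine Or.inr ⟨rfl, ?_⟩
        by_contra hb
        have hbpos : 0 < ‖b‖ ^ 2 := by
          have : 0 < ‖b‖ := norm_pos_iff.2 hb
          positivity
        set C : ℝ := 0 * ρ + ⟪b, w⟫ - hr with hCdef
        set t1 : ℝ := (4 * (|C| + 1) / ‖b‖ ^ 2) ^ ((1:ℝ)/α) with ht1
        have ht1pos : 0 < t1 := Real.rpow_pos_of_pos (by positivity) _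
        have ht1α : t1 ^ α = 4 * (|C| + 1) / ‖b‖ ^ 2 := by
          rw [ht1, ← Real.rpow_mul (by positivity),
            show (1:ℝ)/α * α = 1 by field_simp, Real.rpow_one]
        have hkey := key t1 ht1pos
        have hval : t1 ^ α * ‖b‖ ^ 2 / 4 = |C| + 1 := by
          rw [ht1α]; field_simp
        have hC1 : C ≤ |C| := le_abs_self C
        nlinarith [hkey, hval, hC1]
      · exfalso
        set t0 : ℝ := max 1 ((a * ρ + ⟪b, w⟫ - hr + 1)/a) with ht0def
        have ht0 : 0 < t0 := lt_of_lt_of_le one_pos (le_max_left _ _)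
        have hkey := key t0 ht0
        have h2 : (a * ρ + ⟪b, w⟫ - hr + 1)/a ≤ t0 := le_max_right _ _
        rw [div_le_iff₀ h] at h2
        have hcomm : a * t0 = t0 * a := mul_comm _ _
        have h4 : 0 ≤ t0 ^ α * ‖b‖ ^ 2 / 4 := by positivity
        linarith
    rcases hsign with ha | ⟨ha0, hb0⟩
    · have hLval : Lfun d α (a, b)
          = ((((1 - α) * α ^ (α / (1 - α)) / 4 ^ ((1 : ℝ) / (1 - α))) *
            (‖b‖ ^ ((2 : ℝ) / α) / (-a)) ^ (α / (1 - α)) : ℝ) : EReal) := by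
        simp only [Lfun]
        rw [if_pos ha]
      set lr : ℝ := ((1 - α) * α ^ (α / (1 - α)) / 4 ^ ((1 : ℝ) / (1 - α))) *
        (‖b‖ ^ ((2 : ℝ) / α) / (-a)) ^ (α / (1 - α)) with hlrdef
      have hlK : lr = Kval α a (‖b‖ ^ 2 / 4) := (K_form hα0 hα1 ha (norm_nonneg b)).symm
      have hub : a * ρ + ⟪b, w⟫ ≤ hr + lr := by
        rcases hcase with hρpos | ⟨h0, hw0⟩
        · have h1 := inner_quad b w (Real.rpow_pos_of_pos hρpos α)
          have h2 := youngK hα0 hα1 ha (show (0:ℝ) ≤ ‖b‖ ^ 2 / 4 by positivity) hρpos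
          rw [hrdef, if_pos hρpos, hlK]
          have e : ρ ^ α * ‖b‖ ^ 2 / 4 = ‖b‖ ^ 2 / 4 * ρ ^ α := by ring
          linarith
        · have hKnn : 0 ≤ Kval α a (‖b‖ ^ 2 / 4) :=
            Kval_nonneg hα0 hα1 ha (by positivity)
          rw [h0, hw0, inner_zero_right, hrdef, hlK]
          rw [if_neg (by rw [h0]; exact lt_irrefl 0)]
          simpa using hKnn
      have hlb : lr ≤ a * ρ + ⟪b, w⟫ - hr := by
        by_cases hb : b = 0
        · have hlr0 : lr = 0 := by
            rw [hlK, hb]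
            simpa using Kval_zero (a := a) hα0 hα1
          rw [hlr0]; linarith
        · have hbn : 0 < ‖b‖ := norm_pos_iff.2 hb
          have hcpos : (0:ℝ) < ‖b‖ ^ 2 / 4 := by positivity
          have hna : 0 < -a := by linarith
          set t' : ℝ := (α * (‖b‖ ^ 2 / 4) / (-a)) ^ ((1:ℝ)/(1-α)) with ht'
          have ht'pos : 0 < t' := Real.rpow_pos_of_pos (by positivity) _
          have heqy := youngK_eq hα0 hα1 ha hcpos
          rw [← ht'] at heqy
          have hk := key t' ht'pos
          rw [hlK]
          have e : t' ^ α * ‖b‖ ^ 2 / 4 = ‖b‖ ^ 2 / 4 * t' ^ α := by ring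
          linarith
      rw [hHval, hLval, ← EReal.coe_add, EReal.coe_eq_coe_iff]
      have : lr = ((1 - α) * α ^ (α / (1 - α)) / 4 ^ ((1 : ℝ) / (1 - α))) *
        (‖b‖ ^ ((2 : ℝ) / α) / (-a)) ^ (α / (1 - α)) := hlrdef
      linarith
    · rw [ha0, hb0]
      have hLval : Lfun d α ((0:ℝ), (0:EuclideanSpace ℝ (Fin d))) = ((0:ℝ) : EReal) := by
        simp [Lfun]
      have hr0 : hr ≤ 0 := by
        have := key0
        rw [ha0, hb0] at this
        simpa using this
      have hre : hr = 0 := le_antisymm hr0 hrnn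
      rw [hHval, hLval, hre, ← EReal.coe_add, EReal.coe_eq_coe_iff]
      simp
  · -- Part 2: equality implies subgradient and formulas
    intro hLfin heq
    have hsign : a < 0 ∨ (a = 0 ∧ b = 0) := by
      by_contra hcon
      have h1 := (not_or.1 hcon).1
      have h2 := (not_or.1 hcon).2
      apply hLfin
      simp only [Lfun]
      rw [if_neg h1, if_neg h2]
    set lr : ℝ := if a < 0 then ((1 - α) * α ^ (α / (1 - α)) / 4 ^ ((1 : ℝ) / (1 - α))) *
      (‖b‖ ^ ((2 : ℝ) / α) / (-a)) ^ (α / (1 - α)) else 0 with hlrdef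
    have hLval : Lfun d α (a, b) = (lr : EReal) := by
      rcases hsign with ha | ⟨ha0, hb0⟩
      · rw [hlrdef, if_pos ha]
        simp only [Lfun]
        rw [if_pos ha]
      · rw [hlrdef, if_neg (by rw [ha0]; exact lt_irrefl 0), ha0, hb0]
        simp [Lfun]
    have hlK : ∀ ha : a < 0, lr = Kval α a (‖b‖ ^ 2 / 4) := fun ha => by
      rw [hlrdef, if_pos ha]
      exact (K_form hα0 hα1 ha (norm_nonneg b)).symm
    have hlrnn : 0 ≤ lr := by
      rcases hsign with ha | ⟨ha0, hb0⟩
      · rw [hlK ha]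
        exact Kval_nonneg hα0 hα1 ha (by positivity)
      · rw [hlrdef, if_neg (by rw [ha0]; exact lt_irrefl 0)]
    have heqr : hr + lr = a * ρ + ⟪b, w⟫ := by
      rw [hHval, hLval, ← EReal.coe_add, EReal.coe_eq_coe_iff] at heq
      exact heq
    have youngPt : ∀ t : ℝ, 0 < t → ∀ v : EuclideanSpace ℝ (Fin d),
        a * t + ⟪b, v⟫ ≤ ‖v‖ ^ 2 / t ^ α + lr := by
      intro t ht v
      rcases hsign with ha | ⟨ha0, hb0⟩
      · rw [hlK ha]
        have h1 := inner_quad b v (Real.rpow_pos_of_pos ht α)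
        have h2 := youngK hα0 hα1 ha (show (0:ℝ) ≤ ‖b‖ ^ 2 / 4 by positivity) ht
        have e : t ^ α * ‖b‖ ^ 2 / 4 = ‖b‖ ^ 2 / 4 * t ^ α := by ring
        linarith
      · rw [ha0, hb0]
        have hnn : (0:ℝ) ≤ ‖v‖ ^ 2 / t ^ α := by positivity
        simp only [inner_zero_left, zero_mul, add_zero]
        linarith
    refine ⟨?_, ?_, ?_⟩
    · -- membership
      simp only [subdiffH, Set.mem_setOf_eq]
      rintro ⟨ρ', w'⟩
      show Hfun d α (ρ, w) + ((a * (ρ' - ρ) + ⟪b, w' - w⟫ : ℝ) : EReal) ≤ Hfun d α (ρ', w')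
      by_cases hρ' : 0 < ρ'
      · rw [hHval, Hfun_pos _ hρ', ← EReal.coe_add, EReal.coe_le_coe_iff]
        have h1 := youngPt ρ' hρ' w'
        have h2 : ⟪b, w' - w⟫ = ⟪b, w'⟫ - ⟪b, w⟫ := inner_sub_right b w' w
        linarith
      · by_cases h0 : ρ' = 0 ∧ w' = 0
        · rw [h0.1, h0.2, hHval, Hfun_zero, ← EReal.coe_add, EReal.coe_le_coe_iff]
          have h2 : ⟪b, (0:EuclideanSpace ℝ (Fin d)) - w⟫ = -⟪b, w⟫ := by
            rw [zero_sub, inner_neg_right]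
          rw [h2]
          linarith
        · rw [Hfun_top hρ' h0]
          exact le_top
    · -- w formula
      rcases hcase with hρpos | ⟨h0, hw0⟩
      · have hrval : hr = ‖w‖ ^ 2 / ρ ^ α := by rw [hrdef, if_pos hρpos]
        have hραpos : 0 < ρ ^ α := Real.rpow_pos_of_pos hρpos α
        have h1 := inner_quad b w hραpos
        have h2 : a * ρ + ρ ^ α * ‖b‖ ^ 2 / 4 ≤ lr := by
          rcases hsign with ha | ⟨ha0, hb0⟩
          · have h3 := youngK hα0 hα1 ha (show (0:ℝ) ≤ ‖b‖ ^ 2 / 4 by positivity) hρpos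
            rw [hlK ha]
            have e : ρ ^ α * ‖b‖ ^ 2 / 4 = ‖b‖ ^ 2 / 4 * ρ ^ α := by ring
            linarith
          · rw [ha0, hb0]
            simpa using hlrnn
        have heq2 : ⟪b, w⟫ = ‖w‖ ^ 2 / ρ ^ α + ρ ^ α * ‖b‖ ^ 2 / 4 := by
          apply le_antisymm h1
          linarith
        exact inner_quad_eq b w hραpos heq2
      · rw [hw0, h0, Real.zero_rpow hα0.ne', mul_zero, zero_smul]
    · -- a formula
      intro hρpos
      have hrval : hr = ‖w‖ ^ 2 / ρ ^ α := by rw [hrdef, if_pos hρpos]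
      rcases hsign with ha | ⟨ha0, hb0⟩
      · by_cases hb : b = 0
        · exfalso
          have hlr0 : lr = 0 := by
            rw [hlK ha, hb]
            simpa using Kval_zero (a := a) hα0 hα1
          have hip0 : ⟪b, w⟫ = 0 := by rw [hb]; exact inner_zero_left w
          have haneg : a * ρ < 0 := mul_neg_of_neg_of_pos ha hρpos
          have hrnn2 : 0 ≤ hr := hrnn
          linarith [heqr]
        · have hbn : 0 < ‖b‖ := norm_pos_iff.2 hb
          have hcpos : (0:ℝ) < ‖b‖ ^ 2 / 4 := by positivity
          have hna : 0 < -a := by linarith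
          have hραpos : 0 < ρ ^ α := Real.rpow_pos_of_pos hρpos α
          have h1 := inner_quad b w hραpos
          have h2 := youngK hα0 hα1 ha hcpos.le hρpos
          have heq3 : a * ρ + ‖b‖ ^ 2 / 4 * ρ ^ α = Kval α a (‖b‖ ^ 2 / 4) := by
            apply le_antisymm h2
            have hlrK : lr = Kval α a (‖b‖ ^ 2 / 4) := hlK ha
            have e : ρ ^ α * ‖b‖ ^ 2 / 4 = ‖b‖ ^ 2 / 4 * ρ ^ α := by ring
            linarith
          have huniq := young_uniq hα0 hα1 ha hcpos hρpos (by linarith [heq3])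
          have hbase : (0:ℝ) < α * (‖b‖ ^ 2 / 4) / (-a) := by positivity
          have hρ1α : ρ ^ (1-α) = α * (‖b‖ ^ 2 / 4) / (-a) := by
            rw [huniq, ← Real.rpow_mul hbase.le,
              show (1:ℝ)/(1-α) * (1-α) = 1 by field_simp, Real.rpow_one]
          have hmm : (-a) * ρ ^ (1-α) = α * (‖b‖ ^ 2 / 4) := by
            rw [hρ1α]; field_simp [ha.ne]
          have hinv : ρ ^ (α-1) = (ρ ^ (1-α))⁻¹ := by
            rw [← Real.rpow_neg hρpos.le]
            congr 1
            ring
          have hppos : 0 < ρ ^ (1-α) := Real.rpow_pos_of_pos hρpos _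
          have hrw : -(α / 4) * (ρ ^ (1-α))⁻¹ * ‖b‖ ^ 2
              = (-(α / 4) * ‖b‖ ^ 2) / ρ ^ (1-α) := by ring
          rw [hinv, hrw, eq_div_iff hppos.ne']
          linear_combination -hmm
      · rw [ha0, hb0]
        simp
end
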